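/- For d ≥ 1 and x, y in the Euclidean ball of radius R in ℝ^d, with w uniform on S^{d-1} and b uniform on [-R,R], independent: E[ 1_{⟨w,x⟩+b>0} · 1_{⟨w,y⟩+b>0} ] = 1/2 - (1/(4R)) · (Γ(1)Γ(d/2)/(Γ(1/2)Γ((d+1)/2))) · ‖x-y‖. -/

import Mathlib

open MeasureTheory Real intervalIntegral

/-- Truncated power `(u)_+^α`, with the convention `(u)_+^0 = 1_{u>0}`. -/
noncomputable def truncPow (α : ℕ) (u : ℝ) : ℝ := if 0 < u then u ^ α else 0

lemma lemA {a c R : ℝ} (ha : |a| ≤ R) (hc : |c| ≤ R) :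
    ∫ b in (-R)..R, truncPow 0 (a + b) * truncPow 0 (c + b) = R + min a c := by
  set m : ℝ := max (-a) (-c) with hm
  have hm1 : -R ≤ m := le_max_of_le_left (neg_le_neg (le_of_abs_le ha))
  have hm2 : m ≤ R := max_le (neg_le_of_neg_le (neg_le_of_abs_le ha))
    (neg_le_of_neg_le (neg_le_of_abs_le hc))
  have hfe : ∀ b : ℝ, truncPow 0 (a + b) * truncPow 0 (c + b)
      = 1 - Set.indicator {x : ℝ | x ≤ m} (fun _ => (1:ℝ)) b := by
    intro b
    simp only [truncPow, pow_zero, Set.indicator_apply, Set.mem_setOf_eq]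
    rcases le_or_gt b m with h | h
    · rcases le_max_iff.mp h with h' | h'
      · rw [if_neg (by linarith), if_pos h]; ring
      · rw [if_pos h]; rcases lt_or_ge 0 (a+b) with h2 | h2
        · rw [if_pos h2, if_neg (by linarith)]; ring
        · rw [if_neg (not_lt.mpr h2)]; ring
    · have h1 : -a < b := lt_of_le_of_lt (le_max_left _ _) h
      have h2 : -c < b := lt_of_le_of_lt (le_max_right _ _) h
      rw [if_pos (by linarith), if_pos (by linarith), if_neg (not_le.mpr h)]; ring
  have hind : IntervalIntegrable (Set.indicator {x : ℝ | x ≤ m} (fun _ => (1:ℝ))) volume (-R) R := by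
    rw [intervalIntegrable_iff]
    exact ((integrableOn_const_iff).mpr (Or.inr measure_Ioc_lt_top)).indicator measurableSet_Iic
  calc ∫ b in (-R)..R, truncPow 0 (a + b) * truncPow 0 (c + b)
      = ∫ b in (-R)..R, (1 - Set.indicator {x : ℝ | x ≤ m} (fun _ => (1:ℝ)) b) := by
        apply intervalIntegral.integral_congr; intro b _; exact hfe b
    _ = (∫ _ in (-R)..R, (1:ℝ)) - ∫ b in (-R)..R, Set.indicator {x : ℝ | x ≤ m} (fun _ => (1:ℝ)) b :=
        intervalIntegral.integral_sub intervalIntegrable_const hind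
    _ = R + min a c := by
      rw [integral_indicator ⟨hm1, hm2⟩, integral_one, integral_one]
      have : m = - min a c := by rw [hm]; rcases le_total a c with h | h <;>
        simp [min_eq_left, min_eq_right, h, max_eq_right, max_eq_left, neg_le_neg h]
      rw [this]; ring

lemma exists_onb {d : ℕ} (hd : 1 ≤ d) {u : EuclideanSpace ℝ (Fin d)} (hu : ‖u‖ = 1) :
    ∃ b : OrthonormalBasis (Fin d) ℝ (EuclideanSpace ℝ (Fin d)), b ⟨0, hd⟩ = u := by
  have card : Module.finrank ℝ (EuclideanSpace ℝ (Fin d)) = Fintype.card (Fin d) := by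
    simp [finrank_euclideanSpace_fin]
  have hv : Orthonormal ℝ (Set.restrict {(⟨0, hd⟩ : Fin d)} (fun _ => u)) := by
    constructor
    · intro i; exact hu
    · intro i j hij
      exact absurd (Subtype.ext ((i.2 : (i : Fin d) ∈ _).trans ((j.2 : (j : Fin d) ∈ _)).symm)) hij
  obtain ⟨b, hb⟩ := hv.exists_orthonormalBasis_extension_of_card_eq card
  exact ⟨b, hb _ rfl⟩

lemma exists_isom {d : ℕ} (hd : 1 ≤ d) {u u' : EuclideanSpace ℝ (Fin d)}
    (hu : ‖u‖ = 1) (hu' : ‖u'‖ = 1) :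
    ∃ e : EuclideanSpace ℝ (Fin d) ≃ₗᵢ[ℝ] EuclideanSpace ℝ (Fin d), e u = u' := by
  obtain ⟨b, hb⟩ := exists_onb hd hu
  obtain ⟨b', hb'⟩ := exists_onb hd hu'
  refine ⟨b.repr.trans b'.repr.symm, ?_⟩
  simp only [LinearIsometryEquiv.trans_apply]
  rw [← hb, ← hb', b.repr_self, b'.repr_symm_single]

lemma lemC {d : ℕ} (μ : Measure (EuclideanSpace ℝ (Fin d))) [IsProbabilityMeasure μ]
    (hinv : ∀ e : EuclideanSpace ℝ (Fin d) ≃ₗᵢ[ℝ] EuclideanSpace ℝ (Fin d), μ.map e = μ)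
    (v : EuclideanSpace ℝ (Fin d)) : ∫ w, (inner ℝ w v : ℝ) ∂μ = 0 := by
  have key : ∫ w, (inner ℝ w v : ℝ) ∂μ = ∫ w, (inner ℝ (-w) v : ℝ) ∂μ := by
    conv_lhs => rw [← hinv (LinearIsometryEquiv.neg ℝ :
      EuclideanSpace ℝ (Fin d) ≃ₗᵢ[ℝ] EuclideanSpace ℝ (Fin d))]
    rw [integral_map (LinearIsometryEquiv.neg ℝ :
        EuclideanSpace ℝ (Fin d) ≃ₗᵢ[ℝ] EuclideanSpace ℝ (Fin d)).continuous.aemeasurable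
      ((continuous_id.inner continuous_const).aestronglyMeasurable)]
    rfl
  simp only [inner_neg_left] at key
  rw [MeasureTheory.integral_neg] at key
  linarith

lemma lemD1 {d : ℕ} (μ : Measure (EuclideanSpace ℝ (Fin d))) [IsProbabilityMeasure μ]
    (hinv : ∀ e : EuclideanSpace ℝ (Fin d) ≃ₗᵢ[ℝ] EuclideanSpace ℝ (Fin d), μ.map e = μ)
    (e : EuclideanSpace ℝ (Fin d) ≃ₗᵢ[ℝ] EuclideanSpace ℝ (Fin d)) (v : EuclideanSpace ℝ (Fin d)) :
    ∫ w, |(inner ℝ w (e v) : ℝ)| ∂μ = ∫ w, |(inner ℝ w v : ℝ)| ∂μ := by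
  conv_lhs => rw [← hinv e]
  rw [integral_map e.continuous.aemeasurable
    ((continuous_id.inner continuous_const).abs.aestronglyMeasurable)]
  simp_rw [e.inner_map_map]

lemma lemD2 {d : ℕ} (μ : Measure (EuclideanSpace ℝ (Fin d))) [IsProbabilityMeasure μ]
    (hinv : ∀ e : EuclideanSpace ℝ (Fin d) ≃ₗᵢ[ℝ] EuclideanSpace ℝ (Fin d), μ.map e = μ)
    (hd : 1 ≤ d) (v : EuclideanSpace ℝ (Fin d)) :
    ∫ w, |(inner ℝ w v : ℝ)| ∂μ
      = ‖v‖ * ∫ w, |(inner ℝ w (EuclideanSpace.single (⟨0, hd⟩ : Fin d) (1:ℝ)) : ℝ)| ∂μ := by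
  rcases eq_or_ne v 0 with rfl | hv
  · simp
  · have hnv : ‖v‖ ≠ 0 := norm_ne_zero_iff.mpr hv
    set u : EuclideanSpace ℝ (Fin d) := ‖v‖⁻¹ • v with hu
    have hu1 : ‖u‖ = 1 := by
      rw [hu, norm_smul, norm_inv, norm_norm, inv_mul_cancel₀ hnv]
    have h1 : ‖(EuclideanSpace.single (⟨0, hd⟩ : Fin d) (1:ℝ) : EuclideanSpace ℝ (Fin d))‖ = 1 := by
      rw [EuclideanSpace.norm_single]; simp
    obtain ⟨e, he⟩ := exists_isom hd h1 hu1
    have hv' : v = ‖v‖ • u := by rw [hu, smul_smul, mul_inv_cancel₀ hnv, one_smul]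
    have hptw : ∀ w : EuclideanSpace ℝ (Fin d), |(inner ℝ w v : ℝ)| = ‖v‖ * |(inner ℝ w u : ℝ)| := by
      intro w
      nth_rewrite 1 [hv']
      rw [real_inner_smul_right, abs_mul, abs_of_nonneg (norm_nonneg v)]
    calc ∫ w, |(inner ℝ w v : ℝ)| ∂μ = ∫ w, ‖v‖ * |(inner ℝ w u : ℝ)| ∂μ := by
          simp_rw [hptw]
      _ = ‖v‖ * ∫ w, |(inner ℝ w u : ℝ)| ∂μ := integral_const_mul _ _
      _ = _ := by rw [← he, lemD1 μ hinv]

lemma gauss_one_dim : ∫ t : ℝ, Real.exp (-π * t^2) = 1 := by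
  rw [integral_gaussian, div_self pi_ne_zero, Real.sqrt_one]

lemma gauss_abs_one_dim : ∫ t : ℝ, |t| * Real.exp (-π * t^2) = 1/π := by
  have h := integral_comp_abs (f := fun s => s * Real.exp (-π * s^2))
  rw [show (∫ t : ℝ, |t| * Real.exp (-π * t^2)) = ∫ t : ℝ, |t| * Real.exp (-π * |t|^2) by
    congr 1; funext t; rw [sq_abs], h]
  have h2 : ∀ s ∈ Set.Ioi (0:ℝ), s * Real.exp (-π * s^2)
      = s ^ (1:ℝ) * Real.exp (-π * s ^ (2:ℝ)) := by
    intro s hs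
    rw [Real.rpow_one, show (2:ℝ) = ((2:ℕ):ℝ) by norm_num, Real.rpow_natCast]
  rw [setIntegral_congr_fun measurableSet_Ioi h2,
    integral_rpow_mul_exp_neg_mul_rpow two_pos (by norm_num) pi_pos]
  norm_num [Real.rpow_neg_one, Real.Gamma_one]
  rw [mul_comm]; field_simp

lemma lemK {d : ℕ} (hd : 1 ≤ d) {u : EuclideanSpace ℝ (Fin d)} (hu : ‖u‖ = 1) :
    ∫ z : EuclideanSpace ℝ (Fin d), |(inner ℝ u z : ℝ)| * Real.exp (-π * ‖z‖^2) = 1/π := by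
  obtain ⟨b, hb⟩ := exists_onb hd hu
  set i0 : Fin d := ⟨0, hd⟩ with hi0
  have step1 : (fun z : EuclideanSpace ℝ (Fin d) => |(inner ℝ u z : ℝ)| * Real.exp (-π * ‖z‖^2))
      = fun z => (fun ζ : EuclideanSpace ℝ (Fin d) => |ζ i0| * Real.exp (-π * ‖ζ‖^2))
          (b.measurableEquiv z) := by
    funext z
    have : (b.measurableEquiv z : EuclideanSpace ℝ (Fin d)) = b.repr z := rfl
    simp only [this, b.repr_apply_apply, hb, LinearIsometryEquiv.norm_map]
  rw [step1, (b.measurePreserving_measurableEquiv).integral_comp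
    (b.measurableEquiv.measurableEmbedding)
    (fun ζ : EuclideanSpace ℝ (Fin d) => |ζ i0| * Real.exp (-π * ‖ζ‖^2))]
  rw [← (MeasurePreserving.symm _ (EuclideanSpace.volume_preserving_symm_measurableEquiv_toLp (Fin d))).integral_comp
    (MeasurableEquiv.measurableEmbedding _)
    (fun ζ : EuclideanSpace ℝ (Fin d) => |ζ i0| * Real.exp (-π * ‖ζ‖^2))]
  have step2 : ∀ ξ : Fin d → ℝ,
      (fun ζ : EuclideanSpace ℝ (Fin d) => |ζ i0| * Real.exp (-π * ‖ζ‖^2))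
        ((MeasurableEquiv.toLp 2 (Fin d → ℝ)).symm.symm ξ)
      = ∏ i, (if i = i0 then |ξ i| else 1) * Real.exp (-π * (ξ i)^2) := by
    intro ξ
    have hcoord : ∀ i, ((MeasurableEquiv.toLp 2 (Fin d → ℝ)).symm.symm ξ) i = ξ i := fun i => rfl
    have hnorm : ‖(MeasurableEquiv.toLp 2 (Fin d → ℝ)).symm.symm ξ‖^2 = ∑ i, (ξ i)^2 := by
      rw [EuclideanSpace.norm_eq]
      rw [Real.sq_sqrt (by positivity)]
      simp [hcoord, sq_abs]
    simp only [hcoord, hnorm]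
    rw [Finset.prod_mul_distrib, Finset.prod_ite_eq', if_pos (Finset.mem_univ i0),
      Finset.mul_sum, ← Real.exp_sum]
  simp_rw [step2]
  rw [MeasureTheory.volume_pi, integral_fintype_prod_eq_prod (f := fun i t => (if i = i0 then |t| else 1)
    * Real.exp (-π * t^2))]
  have step3 : ∀ i : Fin d, (∫ t : ℝ, (if i = i0 then |t| else 1) * Real.exp (-π * t^2))
      = if i = i0 then 1/π else 1 := by
    intro i
    by_cases h : i = i0
    · simp only [h, if_true]; exact gauss_abs_one_dim
    · simp only [h, if_false, one_mul]; exact gauss_one_dim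
  simp_rw [step3]
  rw [Finset.prod_ite_eq', if_pos (Finset.mem_univ i0)]
lemma int_abs_gauss_1d : MeasureTheory.Integrable (fun t : ℝ => |t| * Real.exp (-π * t^2)) := by
  refine ((integrable_mul_exp_neg_mul_sq pi_pos).abs).congr (Filter.Eventually.of_forall ?_)
  intro t; simp only [abs_mul, abs_of_pos (Real.exp_pos _)]

lemma lemGpi {d : ℕ} : MeasureTheory.Integrable
    (fun ξ : Fin d → ℝ => Real.sqrt (∑ i, (ξ i)^2) * Real.exp (-π * ∑ i, (ξ i)^2)) := by
  have hbd : ∀ j : Fin d, MeasureTheory.Integrable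
      (fun ξ : Fin d → ℝ => ∏ i, ((if i = j then |ξ i| else 1) * Real.exp (-π * (ξ i)^2))) := by
    intro j
    exact MeasureTheory.Integrable.fintype_prod_dep
      (f := fun i t => (if i = j then |t| else 1) * Real.exp (-π * t^2))
      (fun i => by
        by_cases h : i = j
        · simpa [h] using int_abs_gauss_1d
        · simpa [h] using integrable_exp_neg_mul_sq pi_pos)
  refine MeasureTheory.Integrable.mono'
    (MeasureTheory.integrable_finset_sum Finset.univ (fun j _ => hbd j)) ?_
    (Filter.Eventually.of_forall ?_)
  · apply Continuous.aestronglyMeasurable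
    fun_prop
  · intro ξ
    have hprod : ∀ j : Fin d, (∏ i, ((if i = j then |ξ i| else 1) * Real.exp (-π * (ξ i)^2)))
        = |ξ j| * Real.exp (-π * ∑ i, (ξ i)^2) := by
      intro j
      rw [Finset.prod_mul_distrib, Finset.prod_ite_eq', if_pos (Finset.mem_univ j),
        Finset.mul_sum, ← Real.exp_sum]
    have hnn : (0:ℝ) ≤ Real.sqrt (∑ i, (ξ i)^2) * Real.exp (-π * ∑ i, (ξ i)^2) :=
      mul_nonneg (Real.sqrt_nonneg _) (Real.exp_pos _).le
    rw [Real.norm_eq_abs, abs_of_nonneg hnn]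
    calc Real.sqrt (∑ i, (ξ i)^2) * Real.exp (-π * ∑ i, (ξ i)^2)
        ≤ (∑ i, |ξ i|) * Real.exp (-π * ∑ i, (ξ i)^2) := by
          refine mul_le_mul_of_nonneg_right ?_ (Real.exp_pos _).le
          have h1 : (∑ i, (ξ i)^2) ≤ (∑ i, |ξ i|)^2 := by
            refine le_trans (le_of_eq ?_) (Finset.sum_sq_le_sq_sum_of_nonneg
              (fun i _ => abs_nonneg (ξ i)))
            simp [sq_abs]
          calc Real.sqrt (∑ i, (ξ i)^2) ≤ Real.sqrt ((∑ i, |ξ i|)^2) := Real.sqrt_le_sqrt h1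
            _ = ∑ i, |ξ i| := Real.sqrt_sq (by positivity)
      _ = ∑ j, (∏ i, ((if i = j then |ξ i| else 1) * Real.exp (-π * (ξ i)^2))) := by
          simp_rw [hprod]; rw [Finset.sum_mul]

lemma lemGint {d : ℕ} : MeasureTheory.Integrable
    (fun z : EuclideanSpace ℝ (Fin d) => ‖z‖ * Real.exp (-π * ‖z‖^2)) := by
  rw [← MeasurePreserving.integrable_comp_emb
    (MeasurePreserving.symm _ (EuclideanSpace.volume_preserving_symm_measurableEquiv_toLp (Fin d)))
    (MeasurableEquiv.measurableEmbedding _)]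
  refine lemGpi.congr (Filter.Eventually.of_forall fun ξ => ?_)
  have hnorm : ‖(MeasurableEquiv.toLp 2 (Fin d → ℝ)).symm.symm ξ‖
      = Real.sqrt (∑ i, (ξ i)^2) := by
    rw [EuclideanSpace.norm_eq]
    congr 1
    exact Finset.sum_congr rfl fun i _ => by rw [Real.norm_eq_abs, sq_abs]; rfl
  simp only [Function.comp_apply, hnorm]
  rw [Real.sq_sqrt (by positivity)]
lemma lemL {d : ℕ} (hd : 1 ≤ d) :
    ∫ z : EuclideanSpace ℝ (Fin d), ‖z‖ * Real.exp (-π * ‖z‖^2)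
      = Real.Gamma (((d:ℝ)+1)/2) / (Real.sqrt π * Real.Gamma ((d:ℝ)/2)) := by
  haveI : Nonempty (Fin d) := ⟨⟨0, hd⟩⟩
  have hd0 : (0:ℝ) < (d:ℝ) := by exact_mod_cast hd
  have hpolar := MeasureTheory.integral_fun_norm_addHaar
    (volume : Measure (EuclideanSpace ℝ (Fin d))) (fun r : ℝ => r * Real.exp (-π * r^2))
  simp only [finrank_euclideanSpace_fin, smul_eq_mul, nsmul_eq_mul] at hpolar
  rw [hpolar]
  have hvol : volume.real (Metric.ball (0 : EuclideanSpace ℝ (Fin d)) 1)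
      = Real.sqrt π ^ d / Real.Gamma ((d:ℝ)/2 + 1) := by
    rw [Measure.real, EuclideanSpace.volume_ball (Fin d) 0 1, Fintype.card_fin, ENNReal.toReal_mul,
      ENNReal.toReal_pow, ENNReal.toReal_ofReal zero_le_one, one_pow, one_mul,
      ENNReal.toReal_ofReal (div_nonneg (pow_nonneg (Real.sqrt_nonneg _) _)
        (Real.Gamma_pos_of_pos (by positivity)).le)]
  have hint : ∫ y in Set.Ioi (0:ℝ), y ^ (d - 1) * (y * Real.exp (-π * y^2))
      = π ^ (-((d:ℝ)+1)/2) * (1/2) * Real.Gamma (((d:ℝ)+1)/2) := by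
    rw [← integral_rpow_mul_exp_neg_mul_rpow two_pos
      (lt_of_lt_of_le neg_one_lt_zero (Nat.cast_nonneg d)) pi_pos]
    refine MeasureTheory.setIntegral_congr_fun measurableSet_Ioi fun y hy => ?_
    rw [← mul_assoc, ← pow_succ, Nat.sub_add_cancel hd,
      show (2:ℝ) = ((2:ℕ):ℝ) by norm_num]
    simp [Real.rpow_natCast]
  rw [hvol, hint]
  have hG : Real.Gamma ((d:ℝ)/2 + 1) = ((d:ℝ)/2) * Real.Gamma ((d:ℝ)/2) :=
    Real.Gamma_add_one (by positivity)
  have hsq : Real.sqrt π ^ d = π ^ ((d:ℝ)/2) := by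
    rw [Real.sqrt_eq_rpow, ← Real.rpow_natCast (π ^ ((1:ℝ)/2)) d, ← Real.rpow_mul pi_pos.le]
    congr 1; ring
  have hA0 : π ^ ((d:ℝ)/2) ≠ 0 := (Real.rpow_pos_of_pos pi_pos _).ne'
  have hB : π ^ (-((d:ℝ)+1)/2) = (Real.sqrt π)⁻¹ * (π ^ ((d:ℝ)/2))⁻¹ := by
    have h1 : π ^ ((d:ℝ)/2) * π ^ (-((d:ℝ)+1)/2) = (Real.sqrt π)⁻¹ := by
      rw [← Real.rpow_add pi_pos, show (d:ℝ)/2 + (-((d:ℝ)+1)/2) = -(1/2) by ring,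
        Real.rpow_neg pi_pos.le, Real.sqrt_eq_rpow]
    field_simp at h1 ⊢
    linarith [h1]
  rw [hG, hsq, hB]
  have hG0 : Real.Gamma ((d:ℝ)/2) ≠ 0 := (Real.Gamma_pos_of_pos (by positivity)).ne'
  have hs0 : Real.sqrt π ≠ 0 := (Real.sqrt_pos.mpr pi_pos).ne'
  field_simp
lemma lemD {d : ℕ} (μ : Measure (EuclideanSpace ℝ (Fin d))) [IsProbabilityMeasure μ]
    (hinv : ∀ e : EuclideanSpace ℝ (Fin d) ≃ₗᵢ[ℝ] EuclideanSpace ℝ (Fin d), μ.map e = μ)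
    (hsphere : ∀ᵐ w ∂μ, ‖w‖ = 1) (hd : 1 ≤ d) (v : EuclideanSpace ℝ (Fin d)) :
    ∫ w, |(inner ℝ w v : ℝ)| ∂μ
      = Real.Gamma ((d:ℝ)/2) / (Real.sqrt π * Real.Gamma (((d:ℝ)+1)/2)) * ‖v‖ := by
  have hu0 : ‖(EuclideanSpace.single (⟨0, hd⟩ : Fin d) (1:ℝ) :
      EuclideanSpace ℝ (Fin d))‖ = 1 := by
    rw [EuclideanSpace.norm_single]; simp
  set c0 : ℝ := ∫ w, |(inner ℝ w (EuclideanSpace.single (⟨0, hd⟩ : Fin d) (1:ℝ)) : ℝ)| ∂μ with hc0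
  set f : EuclideanSpace ℝ (Fin d) → EuclideanSpace ℝ (Fin d) → ℝ :=
    fun w z => |(inner ℝ w z : ℝ)| * Real.exp (-π * ‖z‖^2) with hf
  have hfcont : Continuous (Function.uncurry f) := by
    apply Continuous.mul
    · exact continuous_inner.abs
    · exact Real.continuous_exp.comp (continuous_const.mul (continuous_snd.norm.pow 2))
  have hBcont : Continuous (fun p : EuclideanSpace ℝ (Fin d) × EuclideanSpace ℝ (Fin d) =>
      ‖p.2‖ * Real.exp (-π * ‖p.2‖^2)) := by
    exact (continuous_snd.norm).mul
      (Real.continuous_exp.comp (continuous_const.mul (continuous_snd.norm.pow 2)))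
  have hBint : Integrable (fun p : EuclideanSpace ℝ (Fin d) × EuclideanSpace ℝ (Fin d) =>
      ‖p.2‖ * Real.exp (-π * ‖p.2‖^2)) (μ.prod volume) := by
    rw [MeasureTheory.integrable_prod_iff hBcont.aestronglyMeasurable]
    refine ⟨Filter.Eventually.of_forall fun w => lemGint, ?_⟩
    exact (integrable_const (∫ y : EuclideanSpace ℝ (Fin d),
      ‖‖y‖ * Real.exp (-π * ‖y‖^2)‖ ∂volume)).congr (Filter.Eventually.of_forall fun _ => rfl)
  have hprod_ae : ∀ᵐ p ∂(μ.prod (volume : Measure (EuclideanSpace ℝ (Fin d)))), ‖p.1‖ = 1 := by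
    rw [MeasureTheory.ae_iff]
    have hseteq : {p : EuclideanSpace ℝ (Fin d) × EuclideanSpace ℝ (Fin d) | ¬ ‖p.1‖ = 1}
        = {w : EuclideanSpace ℝ (Fin d) | ¬ ‖w‖ = 1} ×ˢ (Set.univ : Set (EuclideanSpace ℝ (Fin d))) := by
      ext p; simp [Set.mem_prod]
    rw [hseteq, Measure.prod_prod, MeasureTheory.ae_iff.mp hsphere, zero_mul]
  have hF : Integrable (Function.uncurry f) (μ.prod volume) := by
    refine MeasureTheory.Integrable.mono' hBint hfcont.aestronglyMeasurable ?_
    refine hprod_ae.mono fun p hp => ?_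
    rw [show Function.uncurry f p = |(inner ℝ p.1 p.2 : ℝ)| * Real.exp (-π * ‖p.2‖^2) from rfl]
    rw [Real.norm_eq_abs, abs_of_nonneg (mul_nonneg (abs_nonneg _) (Real.exp_pos _).le)]
    refine mul_le_mul_of_nonneg_right ?_ (Real.exp_pos _).le
    calc |(inner ℝ p.1 p.2 : ℝ)| ≤ ‖p.1‖ * ‖p.2‖ := abs_real_inner_le_norm _ _
      _ = ‖p.2‖ := by rw [hp, one_mul]
  have hswap := MeasureTheory.integral_integral_swap hF
  have h1 : ∫ w, (∫ z, f w z) ∂μ = 1/π := by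
    rw [MeasureTheory.integral_congr_ae (hsphere.mono fun w hw => lemK hd hw)]
    simp [measure_univ]
  have h2 : ∫ z : EuclideanSpace ℝ (Fin d), (∫ w, f w z ∂μ)
      = c0 * (Real.Gamma (((d:ℝ)+1)/2) / (Real.sqrt π * Real.Gamma ((d:ℝ)/2))) := by
    have hz : ∀ z : EuclideanSpace ℝ (Fin d),
        (∫ w, f w z ∂μ) = c0 * (‖z‖ * Real.exp (-π * ‖z‖^2)) := by
      intro z
      rw [hf]
      simp only
      rw [MeasureTheory.integral_mul_const, lemD2 μ hinv hd z, ← hc0]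
      ring
    simp_rw [hz]
    rw [MeasureTheory.integral_const_mul, lemL hd]
  have hkey : (1:ℝ)/π = c0 * (Real.Gamma (((d:ℝ)+1)/2) / (Real.sqrt π * Real.Gamma ((d:ℝ)/2))) := by
    rw [← h1, ← h2]; exact hswap
  have hG1 : Real.Gamma ((d:ℝ)/2) ≠ 0 := (Real.Gamma_pos_of_pos (by positivity)).ne'
  have hG2 : Real.Gamma (((d:ℝ)+1)/2) ≠ 0 := (Real.Gamma_pos_of_pos (by positivity)).ne'
  have hs0 : Real.sqrt π ≠ 0 := (Real.sqrt_pos.mpr pi_pos).ne'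
  have hs : Real.sqrt π * Real.sqrt π = π := Real.mul_self_sqrt pi_pos.le
  have hc : c0 = Real.Gamma ((d:ℝ)/2) / (Real.sqrt π * Real.Gamma (((d:ℝ)+1)/2)) := by
    field_simp at hkey
    rw [eq_div_iff (mul_ne_zero hs0 hG2)]
    refine mul_right_cancel₀ hs0 ?_
    linear_combination (c0 * Real.Gamma (((d:ℝ)+1)/2)) * hs - hkey
  rw [lemD2 μ hinv hd v, ← hc0, hc]
  ring

/-- For `d ≥ 1`, `x, y` in the Euclidean ball of radius `R` in `ℝ^d`, `w` uniformly
distributed on the unit sphere `S^{d-1}` (a rotation-invariant probability measure `μ`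
concentrated on the unit sphere) and `b` uniform on `[-R,R]`, independent:
`E[1_{⟨w,x⟩+b>0} 1_{⟨w,y⟩+b>0}] = 1/2 - (1/(4R)) Γ(1)Γ(d/2)/(Γ(1/2)Γ((d+1)/2)) ‖x-y‖`. -/
theorem stmt15 (d : ℕ) (hd : 1 ≤ d) (R : ℝ) (hR : 0 < R)
    (μ : Measure (EuclideanSpace ℝ (Fin d))) [IsProbabilityMeasure μ]
    (hsphere : ∀ᵐ w ∂μ, ‖w‖ = 1)
    (hinv : ∀ e : EuclideanSpace ℝ (Fin d) ≃ₗᵢ[ℝ] EuclideanSpace ℝ (Fin d), μ.map e = μ)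
    (x y : EuclideanSpace ℝ (Fin d)) (hx : ‖x‖ ≤ R) (hy : ‖y‖ ≤ R) :
    ∫ w, (1 / (2 * R)) * (∫ b in (-R)..R,
        truncPow 0 ((inner ℝ w x : ℝ) + b) * truncPow 0 ((inner ℝ w y : ℝ) + b)) ∂μ
      = 1 / 2 - (1 / (4 * R)) * (Real.Gamma 1 * Real.Gamma (d / 2)
          / (Real.Gamma (1 / 2) * Real.Gamma ((d + 1) / 2))) * ‖x - y‖ := by
  have habs : ∀ᵐ w ∂μ, (1 / (2 * R)) * (∫ b in (-R)..R,
        truncPow 0 ((inner ℝ w x : ℝ) + b) * truncPow 0 ((inner ℝ w y : ℝ) + b))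
      = (1 / (2 * R)) * (R + min (inner ℝ w x : ℝ) (inner ℝ w y : ℝ)) := by
    refine hsphere.mono fun w hw => ?_
    congr 1
    apply lemA
    · calc |(inner ℝ w x : ℝ)| ≤ ‖w‖ * ‖x‖ := abs_real_inner_le_norm _ _
        _ ≤ R := by rw [hw, one_mul]; exact hx
    · calc |(inner ℝ w y : ℝ)| ≤ ‖w‖ * ‖y‖ := abs_real_inner_le_norm _ _
        _ ≤ R := by rw [hw, one_mul]; exact hy
  rw [integral_congr_ae habs]
  have hmin : ∀ w : EuclideanSpace ℝ (Fin d),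
      (1 / (2 * R)) * (R + min (inner ℝ w x : ℝ) (inner ℝ w y : ℝ))
      = 1/2 + (1/(4*R)) * (inner ℝ w x : ℝ) + (1/(4*R)) * (inner ℝ w y : ℝ)
        - (1/(4*R)) * |(inner ℝ w (x - y) : ℝ)| := by
    intro w
    have h1 : (inner ℝ w (x - y) : ℝ) = (inner ℝ w x : ℝ) - (inner ℝ w y : ℝ) := inner_sub_right _ _ _
    rcases le_total (inner ℝ w x : ℝ) (inner ℝ w y : ℝ) with h | h
    · rw [min_eq_left h, h1, abs_of_nonpos (by linarith)]; field_simp; ring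
    · rw [min_eq_right h, h1, abs_of_nonneg (by linarith)]; field_simp; ring
  simp_rw [hmin]
  have hint : ∀ v : EuclideanSpace ℝ (Fin d), Integrable (fun w => (inner ℝ w v : ℝ)) μ := by
    intro v
    refine Integrable.mono' (integrable_const ‖v‖)
      ((continuous_id.inner continuous_const).aestronglyMeasurable)
      (hsphere.mono fun w hw => ?_)
    rw [Real.norm_eq_abs]
    calc |(inner ℝ w v : ℝ)| ≤ ‖w‖ * ‖v‖ := abs_real_inner_le_norm _ _
      _ = ‖v‖ := by rw [hw, one_mul]
  have I1 : Integrable (fun w : EuclideanSpace ℝ (Fin d) =>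
      1/2 + (1/(4*R)) * (inner ℝ w x : ℝ)) μ :=
    (integrable_const _).add ((hint x).const_mul _)
  have I2 : Integrable (fun w : EuclideanSpace ℝ (Fin d) =>
      (1/2 + (1/(4*R)) * (inner ℝ w x : ℝ)) + (1/(4*R)) * (inner ℝ w y : ℝ)) μ :=
    I1.add ((hint y).const_mul _)
  have I3 : Integrable (fun w : EuclideanSpace ℝ (Fin d) =>
      (1/(4*R)) * |(inner ℝ w (x - y) : ℝ)|) μ := ((hint (x - y)).abs).const_mul _
  rw [integral_sub I2 I3,
    integral_add I1 ((hint y).const_mul _),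
    integral_add (integrable_const _) ((hint x).const_mul _),
    MeasureTheory.integral_const, MeasureTheory.integral_const_mul, MeasureTheory.integral_const_mul, MeasureTheory.integral_const_mul,
    lemC μ hinv x, lemC μ hinv y, lemD μ hinv hsphere hd (x - y)]
  simp only [measure_univ, probReal_univ, ENNReal.toReal_one, smul_eq_mul, one_mul, mul_zero]
  rw [Real.Gamma_one, Real.Gamma_one_half_eq]
  ring
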